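/- Let n, r be integers with n ≥ 2 and 1 ≤ r ≤ n−2, and let g : [0,1] → ℝ be continuously differentiable. Then | ∫₀¹ (n+r−1) p_{n+r−2, r−1}(t) (g(t) − g(0)) dt | ≤ ‖g'‖ · r/(n+r), and likewise | ∫₀¹ (n+r−1) p_{n+r−2, n−1}(t) (g(t) − g(1)) dt | ≤ ‖g'‖ · r/(n+r). -/

import Mathlib

/-- Bernstein basis polynomial `p_{m,j}(t) = C(m,j) t^j (1-t)^{m-j}`. -/
noncomputable def bern (m j : ℕ) (t : ℝ) : ℝ :=
  (m.choose j : ℝ) * t ^ j * (1 - t) ^ (m - j)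

/-- Supremum norm on `[0,1]`. -/
noncomputable def supNorm (g : ℝ → ℝ) : ℝ :=
  ⨆ x : Set.Icc (0:ℝ) 1, |g x|



open intervalIntegral in
lemma beta_nat : ∀ (b a : ℕ), ∫ t in (0:ℝ)..1, t ^ a * (1 - t) ^ b
    = (a.factorial * b.factorial : ℝ) / ((a + b + 1).factorial) := by
  intro b
  induction b with
  | zero =>
    intro a
    simp [integral_pow, Nat.factorial_succ]
    field_simp
  | succ b ih =>
    intro a
    have hderiv : ∀ t : ℝ, HasDerivAt (fun t : ℝ => t ^ (a+1) * (1 - t) ^ (b+1))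
        (((a:ℝ)+1) * t ^ a * (1-t)^(b+1) - ((b:ℝ)+1) * t^(a+1) * (1-t)^b) t := by
      intro t
      have h1 : HasDerivAt (fun t : ℝ => t ^ (a+1)) (((a:ℝ)+1) * t ^ a) t := by
        simpa using hasDerivAt_pow (a+1) t
      have h2 : HasDerivAt (fun t : ℝ => (1 - t) ^ (b+1)) (-(((b:ℝ)+1) * (1-t) ^ b)) t := by
        have := (hasDerivAt_pow (b+1) (1 - t)).comp t ((hasDerivAt_const t (1:ℝ)).sub (hasDerivAt_id t))
        simpa [mul_comm, Function.comp_def] using this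
      have := h1.mul h2
      exact this.congr_deriv (by ring)
    have hint : ∫ t in (0:ℝ)..1, (((a:ℝ)+1) * t ^ a * (1-t)^(b+1) - ((b:ℝ)+1) * t^(a+1) * (1-t)^b)
        = 0 := by
      rw [integral_eq_sub_of_hasDerivAt (fun t _ => hderiv t)]
      · norm_num
      · apply Continuous.intervalIntegrable
        continuity
    have i1 : IntervalIntegrable (fun t : ℝ => ((a:ℝ)+1) * t ^ a * (1-t)^(b+1)) MeasureTheory.volume 0 1 := by
      apply Continuous.intervalIntegrable; continuity
    have i2 : IntervalIntegrable (fun t : ℝ => ((b:ℝ)+1) * t^(a+1) * (1-t)^b) MeasureTheory.volume 0 1 := by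
      apply Continuous.intervalIntegrable; continuity
    rw [integral_sub i1 i2] at hint
    have e1 : ∫ t in (0:ℝ)..1, ((a:ℝ)+1) * t ^ a * (1-t)^(b+1)
        = ((a:ℝ)+1) * ∫ t in (0:ℝ)..1, t ^ a * (1-t)^(b+1) := by
      rw [← integral_const_mul]; simp [mul_assoc]
    have e2 : ∫ t in (0:ℝ)..1, ((b:ℝ)+1) * t ^ (a+1) * (1-t)^b
        = ((b:ℝ)+1) * ∫ t in (0:ℝ)..1, t ^ (a+1) * (1-t)^b := by
      rw [← integral_const_mul]; simp [mul_assoc]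
    rw [e1, e2, ih (a+1)] at hint
    have ha : ((a:ℝ)+1) ≠ 0 := by positivity
    have key : ∫ t in (0:ℝ)..1, t ^ a * (1-t)^(b+1)
        = (((b:ℝ)+1) * ((a+1).factorial * b.factorial : ℝ) / ((a + 1 + b + 1).factorial)) / ((a:ℝ)+1) := by
      field_simp at hint ⊢
      linarith [hint]
    rw [key]
    have h3 : ((a+1).factorial : ℝ) = ((a:ℝ)+1) * a.factorial := by
      rw [Nat.factorial_succ]; push_cast; ring
    have h4 : ((b+1).factorial : ℝ) = ((b:ℝ)+1) * b.factorial := by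
      rw [Nat.factorial_succ]; push_cast; ring
    have h5 : a + 1 + b + 1 = a + (b+1) + 1 := by omega
    rw [h3, h4, h5]
    have : ((a + (b+1) + 1).factorial : ℝ) ≠ 0 := by positivity
    field_simp

open intervalIntegral in
lemma moment1 (m j : ℕ) (hj : j ≤ m) :
    ∫ t in (0:ℝ)..1, ((m:ℝ)+1) * bern m j t * t = ((j:ℝ)+1)/((m:ℝ)+2) := by
  have e : ∀ t : ℝ, ((m:ℝ)+1) * bern m j t * t
      = (((m:ℝ)+1) * (m.choose j : ℝ)) * (t ^ (j+1) * (1 - t) ^ (m - j)) := by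
    intro t; unfold bern; ring
  simp only [e]
  rw [integral_const_mul, beta_nat]
  have hexp : j + 1 + (m - j) + 1 = m + 2 := by omega
  rw [hexp]
  have hnat : (m+1) * m.choose j * (j+1).factorial * (m-j).factorial = (j+1) * (m+1).factorial := by
    rw [Nat.factorial_succ j, Nat.factorial_succ m, ← Nat.choose_mul_factorial_mul_factorial hj]
    ring
  have h2 : ((m+2).factorial : ℝ) = ((m:ℝ)+2) * (m+1).factorial := by
    rw [show m + 2 = (m+1)+1 from rfl, Nat.factorial_succ]; push_cast; ring
  have hm1 : ((m+1).factorial : ℝ) ≠ 0 := by positivity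
  have hr : (((m:ℝ))+2) ≠ 0 := by positivity
  rw [h2]
  have hnat' : ((m:ℝ)+1) * (m.choose j : ℝ) * ((j+1).factorial * (m-j).factorial : ℝ)
      = ((j:ℝ)+1) * ((m+1).factorial : ℝ) := by
    have h := congrArg (fun k : ℕ => (k:ℝ)) hnat
    push_cast at h
    linear_combination h
  field_simp
  linear_combination hnat'

open intervalIntegral in
lemma moment2 (m j : ℕ) (hj : j ≤ m) :
    ∫ t in (0:ℝ)..1, ((m:ℝ)+1) * bern m j t * (1-t) = ((m:ℝ)-(j:ℝ)+1)/((m:ℝ)+2) := by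
  have e : ∀ t : ℝ, ((m:ℝ)+1) * bern m j t * (1-t)
      = (((m:ℝ)+1) * (m.choose j : ℝ)) * (t ^ j * (1 - t) ^ (m - j + 1)) := by
    intro t; unfold bern; ring
  simp only [e]
  rw [integral_const_mul, beta_nat]
  have hexp : j + (m - j + 1) + 1 = m + 2 := by omega
  rw [hexp]
  have hnat : (m+1) * m.choose j * j.factorial * (m-j+1).factorial = (m-j+1) * (m+1).factorial := by
    rw [Nat.factorial_succ (m-j), Nat.factorial_succ m, ← Nat.choose_mul_factorial_mul_factorial hj]
    ring
  have h2 : ((m+2).factorial : ℝ) = ((m:ℝ)+2) * (m+1).factorial := by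
    rw [show m + 2 = (m+1)+1 from rfl, Nat.factorial_succ]; push_cast; ring
  have hm1 : ((m+1).factorial : ℝ) ≠ 0 := by positivity
  have hr : (((m:ℝ))+2) ≠ 0 := by positivity
  rw [h2]
  have hc : ((m - j + 1 : ℕ) : ℝ) = (m:ℝ) - (j:ℝ) + 1 := by
    push_cast [Nat.cast_sub hj]; ring
  have hnat' : ((m:ℝ)+1) * (m.choose j : ℝ) * ((j.factorial : ℝ) * ((m-j+1).factorial : ℝ))
      = ((m:ℝ)-(j:ℝ)+1) * ((m+1).factorial : ℝ) := by
    have h := congrArg (fun k : ℕ => (k:ℝ)) hnat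
    push_cast [Nat.cast_sub hj] at h
    linear_combination h
  field_simp
  linear_combination hnat'

lemma bern_cont (m j : ℕ) : Continuous (bern m j) := by
  unfold bern; continuity

lemma bern_nonneg (m j : ℕ) {t : ℝ} (h0 : 0 ≤ t) (h1 : t ≤ 1) : 0 ≤ bern m j t := by
  unfold bern
  have : (0:ℝ) ≤ 1 - t := by linarith
  positivity

lemma supNorm_nonneg (f : ℝ → ℝ) : 0 ≤ supNorm f :=
  Real.iSup_nonneg fun _ => abs_nonneg _

lemma deriv_le_supNorm (g : ℝ → ℝ) (hg : ContDiff ℝ 1 g) {x : ℝ} (hx : x ∈ Set.Icc (0:ℝ) 1) :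
    |deriv g x| ≤ supNorm (deriv g) := by
  have hc : Continuous fun x => |deriv g x| := (hg.continuous_deriv le_rfl).abs
  have hbdd : BddAbove (Set.range fun x : Set.Icc (0:ℝ) 1 => |deriv g x|) :=
    ((isCompact_Icc.image hc).bddAbove).mono
      (by rintro _ ⟨x, rfl⟩; exact ⟨x, x.2, rfl⟩)
  exact le_ciSup hbdd ⟨x, hx⟩

lemma mvt_bound (g : ℝ → ℝ) (hg : ContDiff ℝ 1 g) {x y : ℝ}
    (hx : x ∈ Set.Icc (0:ℝ) 1) (hy : y ∈ Set.Icc (0:ℝ) 1) :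
    |g y - g x| ≤ supNorm (deriv g) * |y - x| := by
  have hd : ∀ z ∈ Set.Icc (0:ℝ) 1, DifferentiableWithinAt ℝ g (Set.Icc (0:ℝ) 1) z :=
    fun z _ => (hg.differentiable one_ne_zero z).differentiableWithinAt
  have hb : ∀ z ∈ Set.Icc (0:ℝ) 1, ‖derivWithin g (Set.Icc (0:ℝ) 1) z‖ ≤ supNorm (deriv g) := by
    intro z hz
    rw [(hg.differentiable one_ne_zero z).derivWithin (uniqueDiffOn_Icc one_pos z hz)]
    exact deriv_le_supNorm g hg hz
  have := (convex_Icc (0:ℝ) 1).norm_image_sub_le_of_norm_derivWithin_le hd hb hx hy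
  simpa [Real.norm_eq_abs] using this

open intervalIntegral in
lemma abs_int_le {f h : ℝ → ℝ} (hf : Continuous f) (hh : Continuous h)
    (hb : ∀ t ∈ Set.Icc (0:ℝ) 1, |f t| ≤ h t) :
    |∫ t in (0:ℝ)..1, f t| ≤ ∫ t in (0:ℝ)..1, h t := by
  calc |∫ t in (0:ℝ)..1, f t| ≤ ∫ t in (0:ℝ)..1, |f t| :=
        abs_integral_le_integral_abs zero_le_one
    _ ≤ ∫ t in (0:ℝ)..1, h t := by
        apply integral_mono_on zero_le_one (hf.abs.intervalIntegrable _ _)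
          (hh.intervalIntegrable _ _)
        intro t ht
        exact hb t (by simpa using ht)

theorem endpoint_integral_estimates
    (n r : ℕ) (hn : 2 ≤ n) (hr1 : 1 ≤ r) (hr2 : r + 2 ≤ n)
    (g : ℝ → ℝ) (hg : ContDiff ℝ 1 g) :
    |∫ t in (0:ℝ)..1, ((n : ℝ) + (r : ℝ) - 1) * bern (n + r - 2) (r - 1) t * (g t - g 0)| ≤
        supNorm (deriv g) * ((r : ℝ) / ((n : ℝ) + (r : ℝ))) ∧
      |∫ t in (0:ℝ)..1, ((n : ℝ) + (r : ℝ) - 1) * bern (n + r - 2) (n - 1) t * (g t - g 1)| ≤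
        supNorm (deriv g) * ((r : ℝ) / ((n : ℝ) + (r : ℝ))) := by
  set m := n + r - 2 with hm
  set C := supNorm (deriv g) with hCdef
  have hC0 : 0 ≤ C := supNorm_nonneg _
  have hm2 : m + 2 = n + r := by omega
  have hmc : ((m:ℝ) + 2) = (n:ℝ) + (r:ℝ) := by
    have : ((m:ℝ)+2) = ((m+2 : ℕ) : ℝ) := by push_cast; ring
    rw [this, hm2]; push_cast; ring
  have hcoef : (n:ℝ) + (r:ℝ) - 1 = (m:ℝ) + 1 := by linarith
  have hj1 : r - 1 ≤ m := by omega
  have hj2 : n - 1 ≤ m := by omega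
  have hgc := hg.continuous
  constructor
  · -- first estimate
    have hb : ∀ t ∈ Set.Icc (0:ℝ) 1,
        |((n:ℝ) + (r:ℝ) - 1) * bern m (r-1) t * (g t - g 0)|
          ≤ C * (((m:ℝ)+1) * bern m (r-1) t * t) := by
      intro t ht
      obtain ⟨ht0, ht1⟩ := ht
      have hbn := bern_nonneg m (r-1) ht0 ht1
      have hmvt : |g t - g 0| ≤ C * t := by
        have := mvt_bound g hg (Set.mem_Icc.mpr ⟨le_refl 0, zero_le_one⟩)
          (Set.mem_Icc.mpr ⟨ht0, ht1⟩)
        simpa [abs_of_nonneg ht0] using this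
      rw [abs_mul, hcoef]
      have h1 : |((m:ℝ)+1) * bern m (r-1) t| = ((m:ℝ)+1) * bern m (r-1) t := by
        rw [abs_of_nonneg]; positivity
      rw [h1]
      calc ((m:ℝ)+1) * bern m (r-1) t * |g t - g 0|
          ≤ ((m:ℝ)+1) * bern m (r-1) t * (C * t) := by
            apply mul_le_mul_of_nonneg_left hmvt; positivity
        _ = C * (((m:ℝ)+1) * bern m (r-1) t * t) := by ring
    have key := abs_int_le
      (f := fun t => ((n:ℝ) + (r:ℝ) - 1) * bern m (r-1) t * (g t - g 0))
      (h := fun t => C * (((m:ℝ)+1) * bern m (r-1) t * t))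
      ((continuous_const.mul (bern_cont m (r-1))).mul (hgc.sub continuous_const))
      (continuous_const.mul ((continuous_const.mul (bern_cont m (r-1))).mul continuous_id)) hb
    have hint : ∫ t in (0:ℝ)..1, C * (((m:ℝ)+1) * bern m (r-1) t * t)
        = C * (((r:ℝ)-1+1)/((m:ℝ)+2)) := by
      rw [intervalIntegral.integral_const_mul, moment1 m (r-1) hj1]
      have : ((r-1 : ℕ):ℝ) = (r:ℝ) - 1 := by
        push_cast [Nat.cast_sub hr1]; ring
      rw [this]
    rw [hint] at key
    calc _ ≤ C * (((r:ℝ)-1+1)/((m:ℝ)+2)) := key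
      _ = C * ((r:ℝ) / ((n:ℝ)+(r:ℝ))) := by rw [hmc]; ring_nf
  · -- second estimate
    have hb : ∀ t ∈ Set.Icc (0:ℝ) 1,
        |((n:ℝ) + (r:ℝ) - 1) * bern m (n-1) t * (g t - g 1)|
          ≤ C * (((m:ℝ)+1) * bern m (n-1) t * (1-t)) := by
      intro t ht
      obtain ⟨ht0, ht1⟩ := ht
      have hbn := bern_nonneg m (n-1) ht0 ht1
      have hmvt : |g t - g 1| ≤ C * (1-t) := by
        have := mvt_bound g hg (Set.mem_Icc.mpr ⟨zero_le_one, le_refl 1⟩)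
          (Set.mem_Icc.mpr ⟨ht0, ht1⟩)
        have habs : |t - 1| = 1 - t := by rw [abs_of_nonpos (by linarith)]; ring
        rw [habs] at this
        exact this
      rw [abs_mul, hcoef]
      have h1 : |((m:ℝ)+1) * bern m (n-1) t| = ((m:ℝ)+1) * bern m (n-1) t := by
        rw [abs_of_nonneg]; positivity
      rw [h1]
      calc ((m:ℝ)+1) * bern m (n-1) t * |g t - g 1|
          ≤ ((m:ℝ)+1) * bern m (n-1) t * (C * (1-t)) := by
            apply mul_le_mul_of_nonneg_left hmvt; positivity
        _ = C * (((m:ℝ)+1) * bern m (n-1) t * (1-t)) := by ring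
    have key := abs_int_le
      (f := fun t => ((n:ℝ) + (r:ℝ) - 1) * bern m (n-1) t * (g t - g 1))
      (h := fun t => C * (((m:ℝ)+1) * bern m (n-1) t * (1-t)))
      ((continuous_const.mul (bern_cont m (n-1))).mul (hgc.sub continuous_const))
      (continuous_const.mul ((continuous_const.mul (bern_cont m (n-1))).mul
        (continuous_const.sub continuous_id))) hb
    have hint : ∫ t in (0:ℝ)..1, C * (((m:ℝ)+1) * bern m (n-1) t * (1-t))
        = C * (((m:ℝ)-((n:ℝ)-1)+1)/((m:ℝ)+2)) := by
      rw [intervalIntegral.integral_const_mul, moment2 m (n-1) hj2]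
      have : ((n-1 : ℕ):ℝ) = (n:ℝ) - 1 := by
        push_cast [Nat.cast_sub (by omega : 1 ≤ n)]; ring
      rw [this]
    rw [hint] at key
    have hmr : (m:ℝ) - ((n:ℝ)-1) + 1 = (r:ℝ) := by linarith
    calc _ ≤ C * (((m:ℝ)-((n:ℝ)-1)+1)/((m:ℝ)+2)) := key
      _ = C * ((r:ℝ) / ((n:ℝ)+(r:ℝ))) := by rw [hmc, hmr]
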